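/- Let G be a connected simple graph on a finite nonempty vertex set V, and let d be the diameter of G, i.e., the maximum over all pairs u, v ∈ V of the graph distance (length of a shortest path) between u and v. Then for every nonempty subset T ⊆ V with |T| = S, there exists a connected subgraph H of G whose vertex set contains T and whose edge set has cardinality at most d·(S − 1). -/

import Mathlib

lemma bell_aux {V : Type*} [Fintype V] (G : SimpleGraph V) (hG : G.Connected)
    (t0 : V) (T : Finset V) (ht0 : t0 ∈ T) :
    ∃ H : G.Subgraph, H.Connected ∧ ↑T ⊆ H.verts ∧
      H.edgeSet.ncard ≤ G.diam * (T.card - 1) := by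
  classical
  induction T using Finset.strongInduction with
  | _ T ih =>
  by_cases h : ∃ v ∈ T, v ≠ t0
  · obtain ⟨v, hv, hne⟩ := h
    obtain ⟨H, hc, hsub, hcard⟩ := ih (T.erase v) (Finset.erase_ssubset hv)
      (Finset.mem_erase.2 ⟨hne.symm, ht0⟩)
    obtain ⟨p, hp⟩ := hG.exists_walk_length_eq_dist t0 v
    have hedtop : G.ediam ≠ ⊤ := by
      haveI := hG.nonempty
      obtain ⟨u, w, huw⟩ := G.exists_edist_eq_ediam_of_finite
      rw [← huw]
      exact (SimpleGraph.edist_ne_top_iff_reachable).2 (hG u w)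
    have hplen : p.length ≤ G.diam := hp ▸ SimpleGraph.dist_le_diam hedtop
    have ht0H : t0 ∈ H.verts := hsub (Finset.mem_coe.2 (Finset.mem_erase.2 ⟨hne.symm, ht0⟩))
    refine ⟨H ⊔ p.toSubgraph, SimpleGraph.Subgraph.connected_sup hc.preconnected p.toSubgraph_connected.preconnected
      ⟨t0, ht0H, p.start_mem_verts_toSubgraph⟩, ?_, ?_⟩
    · intro x hx
      by_cases hxv : x = v
      · exact Or.inr (hxv ▸ p.end_mem_verts_toSubgraph)
      · exact Or.inl (hsub (Finset.mem_coe.2 (Finset.mem_erase.2 ⟨hxv, hx⟩)))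
    · rw [SimpleGraph.Subgraph.edgeSet_sup]
      have hpe : p.toSubgraph.edgeSet.ncard ≤ G.diam := by
        rw [p.edgeSet_toSubgraph]
        have : {e | e ∈ p.edges} = ↑p.edges.toFinset := by ext e; simp
        rw [← p.coe_edges_toFinset, Set.ncard_coe_finset]
        calc p.edges.toFinset.card ≤ p.edges.length := p.edges.toFinset_card_le
          _ = p.length := p.length_edges
          _ ≤ G.diam := hplen
      calc (H.edgeSet ∪ p.toSubgraph.edgeSet).ncard
          ≤ H.edgeSet.ncard + p.toSubgraph.edgeSet.ncard :=
            Set.ncard_union_le _ _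
        _ ≤ G.diam * ((T.erase v).card - 1) + G.diam := by
            exact Nat.add_le_add hcard hpe
        _ ≤ G.diam * (T.card - 1) := by
            rw [Finset.card_erase_of_mem hv]
            have h2 : 2 ≤ T.card := Finset.one_lt_card.2 ⟨v, hv, t0, ht0, hne⟩
            calc G.diam * (T.card - 1 - 1) + G.diam
                = G.diam * (T.card - 1 - 1 + 1) := by rw [Nat.mul_add, Nat.mul_one]
              _ ≤ G.diam * (T.card - 1) := Nat.mul_le_mul_left _ (by omega)
  · refine ⟨G.singletonSubgraph t0, SimpleGraph.Subgraph.singletonSubgraph_connected, ?_, ?_⟩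
    · intro x hx
      have : x = t0 := by
        by_contra hxt
        exact h ⟨x, hx, hxt⟩
      simp [this, SimpleGraph.singletonSubgraph]
    · simp [SimpleGraph.edgeSet_singletonSubgraph, Set.ncard_empty]

/-- **Upper bound on the Bell-pair cost, subset case (Theorem 5, upper bound).**
Let `G` be a connected simple graph on a finite nonempty vertex set, and let `d = G.diam`
be its diameter (the maximum graph distance between pairs of vertices). Then for every
nonempty subset `T` of vertices with `|T| = S`, there is a connected subgraph `H` of `G`
whose vertex set contains `T` and which has at most `d * (S - 1)` edges. -/
theorem bell_pair_subset_upper_bound {V : Type*} [Fintype V] [Nonempty V]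
    (G : SimpleGraph V) (hG : G.Connected)
    (T : Finset V) (hT : T.Nonempty) (S : ℕ) (hS : T.card = S) :
    ∃ H : G.Subgraph, H.Connected ∧ ↑T ⊆ H.verts ∧
      H.edgeSet.ncard ≤ G.diam * (S - 1) := by
  obtain ⟨t0, ht0⟩ := hT
  subst hS
  exact bell_aux G hG t0 T ht0
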